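/- Let G be a group, N a normal subgroup of G, and c ≥ 1. Then [N, γ_c(G)] ≤ ⟨T_{c+1}(G) ∩ N⟩ ≤ N ∩ γ_{c+1}(G). -/

import Mathlib

open Subgroup
open scoped commutatorElement

/-- `Tset G c` is the set `T_{c+1}(G)` of left-normed commutators of weight `c+1` in `G`:
`Tset G 0 = G` (weight-one "commutators", i.e. all elements), and
`Tset G (n+1) = {⁅a, g⁆ | a ∈ Tset G n, g ∈ G}`. -/
def Tset (G : Type*) [Group G] : ℕ → Set G
  | 0 => Set.univ
  | n + 1 => {x | ∃ a ∈ Tset G n, ∃ g : G, x = ⁅a, g⁆}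

theorem Tset_conj {G : Type*} [Group G] (n : ℕ) {x : G} (hx : x ∈ Tset G n) (g : G) :
    g * x * g⁻¹ ∈ Tset G n := by
  induction n generalizing x with
  | zero => trivial
  | succ n ih =>
      obtain ⟨a, ha, b, rfl⟩ := hx
      exact ⟨g * a * g⁻¹, ih ha, g * b * g⁻¹, conjugate_commutatorElement a b g⟩

/-- `Tcl c S = ⟨T_{c+1}(G) ∩ S⟩`, the subgroup generated by the left-normed commutators of
weight `c+1` lying in `S`. -/
def Tcl {G : Type*} [Group G] (c : ℕ) (S : Subgroup G) : Subgroup G :=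
  Subgroup.closure (Tset G c ∩ (S : Set G))

instance Tcl_normal {G : Type*} [Group G] (c : ℕ) (S : Subgroup G) [hS : S.Normal] :
    (Tcl c S).Normal := by
  constructor
  intro n hn g
  induction hn using Subgroup.closure_induction with
  | mem x hx =>
      exact Subgroup.subset_closure ⟨Tset_conj c hx.1 g, hS.conj_mem x hx.2 g⟩
  | one => simpa using (Tcl c S).one_mem
  | mul x y _ _ hx hy =>
      have h : g * (x * y) * g⁻¹ = (g * x * g⁻¹) * (g * y * g⁻¹) := by group
      rw [h]; exact mul_mem hx hy
  | inv x _ hx =>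
      have h : g * x⁻¹ * g⁻¹ = (g * x * g⁻¹)⁻¹ := by group
      rw [h]; exact inv_mem hx

theorem Tset_subset_lcs {G : Type*} [Group G] (n : ℕ) :
    Tset G n ⊆ ((⊤ : Subgroup G).lowerCentralSeries n : Set G) := by
  induction n with
  | zero => intro x _; simp [Subgroup.lowerCentralSeries]
  | succ n ih =>
      rintro x ⟨a, ha, b, rfl⟩
      rw [Subgroup.lowerCentralSeries_succ]
      exact Subgroup.commutator_mem_commutator (ih ha) (Subgroup.mem_top b)

theorem Tcl_le {G : Type*} [Group G] (c : ℕ) (S : Subgroup G) : Tcl c S ≤ S :=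
  (Subgroup.closure_le S).2 Set.inter_subset_right

theorem Tcl_le_lcs {G : Type*} [Group G] (c : ℕ) (S : Subgroup G) :
    Tcl c S ≤ (⊤ : Subgroup G).lowerCentralSeries c :=
  (Subgroup.closure_le _).2 fun _ hx => Tset_subset_lcs c hx.1

theorem Tcl_mono {G : Type*} [Group G] (c : ℕ) {R K : Subgroup G} (h : R ≤ K) :
    Tcl c R ≤ Tcl c K :=
  Subgroup.closure_mono (Set.inter_subset_inter_right _ h)

theorem subgroupOf_le_comap_inclusion {F : Type*} [Group F] {A B H₁ H₂ : Subgroup F}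
    (hH : H₁ ≤ H₂) (hAB : A ≤ B) :
    A.subgroupOf H₁ ≤ (B.subgroupOf H₂).comap (Subgroup.inclusion hH) := by
  intro x hx
  rw [Subgroup.mem_comap, Subgroup.mem_subgroupOf, Subgroup.coe_inclusion]
  exact hAB (Subgroup.mem_subgroupOf.mp hx)

theorem lcs_le_Tcl_top {G : Type*} [Group G] (n : ℕ) :
    (⊤ : Subgroup G).lowerCentralSeries n ≤ Tcl n (⊤ : Subgroup G) := by
  induction n with
  | zero =>
      intro x _
      exact Subgroup.subset_closure ⟨trivial, trivial⟩
  | succ n ih =>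
      rw [Subgroup.lowerCentralSeries_succ, Subgroup.commutator_def, Subgroup.closure_le]
      rintro _ ⟨p, hp, q, -, rfl⟩
      have hp' : p ∈ Tcl n (⊤ : Subgroup G) := ih hp
      clear hp
      show ⁅p, q⁆ ∈ Tcl (n + 1) (⊤ : Subgroup G)
      induction hp' using Subgroup.closure_induction with
      | mem t ht =>
          exact Subgroup.subset_closure ⟨⟨t, ht.1, q, rfl⟩, trivial⟩
      | one => simpa using one_mem (Tcl (n + 1) (⊤ : Subgroup G))
      | mul x y _ _ hx hy =>
          have h : ⁅x * y, q⁆ = x * ⁅y, q⁆ * x⁻¹ * ⁅x, q⁆ := by group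
          rw [h]
          exact mul_mem ((Tcl_normal (n + 1) ⊤).conj_mem _ hy x) hx
      | inv x _ hx =>
          have h : ⁅x⁻¹, q⁆ = x⁻¹ * ⁅x, q⁆⁻¹ * x := by group
          rw [h]
          simpa using (Tcl_normal (n + 1) ⊤).conj_mem _ (inv_mem hx) x⁻¹

/-- for a group `G`, a normal subgroup `N` and `c ≥ 1`,
`[N, γ_c(G)] ≤ ⟨T_{c+1}(G) ∩ N⟩ ≤ N ∩ γ_{c+1}(G)`.
Here `γ_j(G) = lowerCentralSeries G (j-1)`, so `γ_c(G) = lowerCentralSeries G (c-1)` and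
`γ_{c+1}(G) = lowerCentralSeries G c`, and `⟨T_{c+1}(G) ∩ N⟩ = Tcl c N`. -/
theorem stmt1 {G : Type*} [Group G] (N : Subgroup G) [N.Normal] (c : ℕ) (hc : 1 ≤ c) :
    ⁅N, (⊤ : Subgroup G).lowerCentralSeries (c - 1)⁆ ≤ Tcl c N ∧
      Tcl c N ≤ N ⊓ (⊤ : Subgroup G).lowerCentralSeries c := by
  constructor
  · rw [Subgroup.commutator_le]
    intro n hn x hx
    have hx' : x ∈ Tcl (c - 1) (⊤ : Subgroup G) := lcs_le_Tcl_top _ hx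
    clear hx
    induction hx' using Subgroup.closure_induction with
    | mem t ht =>
        have hmem : ⁅t, n⁆ ∈ Tset G c ∩ (N : Set G) := by
          constructor
          · have h1 : ⁅t, n⁆ ∈ Tset G ((c - 1) + 1) := ⟨t, ht.1, n, rfl⟩
            rwa [Nat.sub_add_cancel hc] at h1
          · show ⁅t, n⁆ ∈ N
            have h2 : ⁅t, n⁆ = (t * n * t⁻¹) * n⁻¹ := by group
            rw [h2]
            exact mul_mem (‹N.Normal›.conj_mem n hn t) (inv_mem hn)
        have h3 : ⁅n, t⁆ = ⁅t, n⁆⁻¹ := by group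
        rw [h3]
        exact inv_mem (Subgroup.subset_closure hmem)
    | one => simpa using one_mem (Tcl c N)
    | mul x y _ _ hx hy =>
        have h : ⁅n, x * y⁆ = ⁅n, x⁆ * (x * ⁅n, y⁆ * x⁻¹) := by group
        rw [h]
        exact mul_mem hx ((Tcl_normal c N).conj_mem _ hy x)
    | inv x _ hx =>
        have h : ⁅n, x⁻¹⁆ = x⁻¹ * ⁅n, x⁆⁻¹ * x := by group
        rw [h]
        simpa using (Tcl_normal c N).conj_mem _ (inv_mem hx) x⁻¹
  · exact le_inf (Tcl_le c N) (Tcl_le_lcs c N)
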